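/- arXiv:2009.14794 — 5 statements merged into one kernel-verified Lean document; each statement's English description precedes it below -/
import Mathlib

section
/- For any vectors x, y in R^d, exp(x^T y) = E_{ω ~ N(0, I_d)}[exp(ω^T x - ||x||²/2) · exp(ω^T y - ||y||²/2)]. -/
open MeasureTheory ProbabilityTheory
open scoped ENNReal NNReal

lemma real_gauss_lin (t : ℝ) :
    ∫ x : ℝ, Real.exp (-x^2/2 + t*x) = Real.sqrt (2*Real.pi) * Real.exp (t^2/2) := by
  have hb : ((-1/2 : ℂ)).re < 0 := by norm_num
  have h := integral_cexp_quadratic hb (t : ℂ) 0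
  have key : ∀ x : ℝ, Complex.exp ((-1/2 : ℂ) * x ^ 2 + (t:ℂ) * x + 0) =
      ((Real.exp (-x^2/2 + t*x) : ℝ) : ℂ) := by
    intro x
    rw [Complex.ofReal_exp]
    congr 1
    push_cast
    ring
  simp_rw [key] at h
  rw [show (∫ (x:ℝ), ((Real.exp (-x^2/2+t*x) : ℝ) : ℂ)) = ((∫ (x:ℝ), Real.exp (-x^2/2+t*x) : ℝ) : ℂ) from integral_ofReal] at h
  have hR : ((Real.pi : ℂ) / -(-1/2)) ^ (1 / 2 : ℂ) * Complex.exp (0 - (t:ℂ)^2 / (4 * (-1/2))) =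
      ((Real.sqrt (2*Real.pi) * Real.exp (t^2/2) : ℝ) : ℂ) := by
    have h2 : ((Real.pi : ℂ) / -(-1/2)) = ((2 * Real.pi : ℝ) : ℂ) := by push_cast; ring
    have h3 : ((1:ℂ)/2) = ((1/2 : ℝ) : ℂ) := by norm_num
    rw [h2, h3, ← Complex.ofReal_cpow (by positivity), Complex.ofReal_mul, Complex.ofReal_exp,
      Real.sqrt_eq_rpow]
    congr 2
    push_cast
    ring
  rw [hR] at h
  exact_mod_cast h

lemma gauss_mgf (t : ℝ) :
    ∫ x, Real.exp (x * t) ∂(gaussianReal 0 1) = Real.exp (t^2/2) := by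
  rw [gaussianReal_of_var_ne_zero _ one_ne_zero]
  have hd : (gaussianPDF 0 1) = fun x => ((fun x => (gaussianPDFReal 0 1 x).toNNReal) x : ℝ≥0∞) := by
    ext x; rfl
  rw [hd, integral_withDensity_eq_integral_smul
    ((measurable_gaussianPDFReal 0 1).real_toNNReal) _]
  have hpt : ∀ x : ℝ, ((gaussianPDFReal 0 1 x).toNNReal : ℝ≥0) • Real.exp (x * t) =
      (Real.sqrt (2*Real.pi))⁻¹ * Real.exp (-x^2/2 + t*x) := by
    intro x
    rw [NNReal.smul_def, smul_eq_mul, Real.coe_toNNReal _ (gaussianPDFReal_nonneg 0 1 x),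
      gaussianPDFReal]
    push_cast
    rw [mul_one, mul_assoc, ← Real.exp_add]
    congr 2
    ring
  simp_rw [hpt]
  rw [integral_const_mul, real_gauss_lin, ← mul_assoc, inv_mul_cancel₀ (by positivity), one_mul]

noncomputable def stdGaussian (d : ℕ) : Measure (Fin d → ℝ) :=
  Measure.pi fun _ => gaussianReal 0 1

noncomputable local instance gaussSpace : MeasureSpace ℝ := ⟨gaussianReal 0 1⟩

local instance : SigmaFinite (volume : Measure ℝ) :=
  inferInstanceAs (SigmaFinite (gaussianReal 0 1))

/-- For any `x y : ℝ^d`,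
`exp(xᵀy) = E_{ω ~ N(0, I_d)}[exp(ωᵀx - ‖x‖²/2) ⬝ exp(ωᵀy - ‖y‖²/2)]`. -/
theorem softmax_positive_random_features (d : ℕ) (x y : Fin d → ℝ) :
    Real.exp (∑ i, x i * y i) =
      ∫ ω, Real.exp ((∑ i, ω i * x i) - (∑ i, x i ^ 2) / 2) *
             Real.exp ((∑ i, ω i * y i) - (∑ i, y i ^ 2) / 2) ∂(stdGaussian d) := by
  have h1 : ∀ ω : Fin d → ℝ,
      Real.exp ((∑ i, ω i * x i) - (∑ i, x i ^ 2) / 2) *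
        Real.exp ((∑ i, ω i * y i) - (∑ i, y i ^ 2) / 2) =
      (∏ i, Real.exp (ω i * (x i + y i))) *
        Real.exp (-((∑ i, x i ^ 2) + (∑ i, y i ^ 2)) / 2) := by
    intro ω
    rw [← Real.exp_sum, ← Real.exp_add, ← Real.exp_add]
    congr 1
    have h : ∑ i, ω i * (x i + y i) = ∑ i, ω i * x i + ∑ i, ω i * y i := by
      simp [mul_add, Finset.sum_add_distrib]
    linarith
  simp_rw [h1]
  have h2 : stdGaussian d = (volume : Measure (Fin d → ℝ)) := by
    simp [_root_.stdGaussian, volume_pi]; rfl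
  rw [h2, integral_mul_const, volume_pi,
    MeasureTheory.integral_fintype_prod_eq_prod
      (fun i (v : ℝ) => Real.exp (v * (x i + y i)))]
  have h3 : ∀ i, (∫ v : ℝ, Real.exp (v * (x i + y i))) = Real.exp ((x i + y i)^2/2) := by
    intro i
    exact gauss_mgf (x i + y i)
  simp_rw [h3, ← Real.exp_sum, ← Real.exp_add]
  congr 1
  have h4 : ∑ i, (x i + y i)^2 = (∑ i, x i ^ 2) + 2 * (∑ i, x i * y i) + ∑ i, y i ^ 2 := by
    simp [add_sq, Finset.sum_add_distrib, Finset.mul_sum, mul_assoc]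
  have h5 : ∑ i, (x i + y i)^2/2 = (∑ i, (x i + y i)^2)/2 := by
    rw [Finset.sum_div]
  linarith
end

section
/- For any vectors x, y in R^d with z = x + y, exp(x^T y) = exp(-(||x||² + ||y||²)/2) · E_{ω ~ N(0, I_d)}[cosh(ω^T z)]. -/
open MeasureTheory ProbabilityTheory Real
open scoped ENNReal NNReal

lemma gaussPDF_mul_exp (t x : ℝ) :
    gaussianPDFReal 0 1 x * rexp (t * x) = rexp (t ^ 2 / 2) * gaussianPDFReal t 1 x := by
  simp only [gaussianPDFReal, NNReal.coe_one, mul_one, sub_zero]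
  rw [mul_assoc, ← Real.exp_add, mul_comm (rexp (t ^ 2 / 2)), mul_assoc, ← Real.exp_add]
  congr 1
  ring_nf

lemma integrable_exp_mul_gauss (t : ℝ) :
    Integrable (fun x => rexp (t * x)) (gaussianReal 0 1) := by
  rw [gaussianReal_of_var_ne_zero _ one_ne_zero]
  rw [show gaussianPDF 0 1 = fun x => ((Real.toNNReal (gaussianPDFReal 0 1 x) : ℝ≥0) : ℝ≥0∞)
      from rfl]
  rw [integrable_withDensity_iff_integrable_smul
    ((measurable_gaussianPDFReal 0 1).real_toNNReal)]
  have : (fun x => (Real.toNNReal (gaussianPDFReal 0 1 x) : ℝ≥0) • rexp (t * x))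
      = fun x => rexp (t ^ 2 / 2) * gaussianPDFReal t 1 x := by
    funext x
    rw [NNReal.smul_def, smul_eq_mul, Real.coe_toNNReal _ (gaussianPDFReal_nonneg 0 1 x),
      gaussPDF_mul_exp]
  rw [this]
  exact (integrable_gaussianPDFReal t 1).const_mul _

lemma integral_exp_mul_gauss (t : ℝ) :
    ∫ x, rexp (t * x) ∂(gaussianReal 0 1) = rexp (t ^ 2 / 2) := by
  rw [gaussianReal_of_var_ne_zero _ one_ne_zero]
  rw [show gaussianPDF 0 1 = fun x => ((Real.toNNReal (gaussianPDFReal 0 1 x) : ℝ≥0) : ℝ≥0∞)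
      from rfl]
  rw [integral_withDensity_eq_integral_smul
    ((measurable_gaussianPDFReal 0 1).real_toNNReal)]
  have : (fun x => (Real.toNNReal (gaussianPDFReal 0 1 x) : ℝ≥0) • rexp (t * x))
      = fun x => rexp (t ^ 2 / 2) * gaussianPDFReal t 1 x := by
    funext x
    rw [NNReal.smul_def, smul_eq_mul, Real.coe_toNNReal _ (gaussianPDFReal_nonneg 0 1 x),
      gaussPDF_mul_exp]
  rw [this, integral_const_mul, integral_gaussianPDFReal_eq_one t one_ne_zero, mul_one]

lemma pi_integral_prod {ι : Type*} [Fintype ι] (f : ι → ℝ → ℝ) :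
    ∫ ω : ι → ℝ, ∏ i, f i (ω i) ∂(Measure.pi fun _ => gaussianReal 0 1)
      = ∏ i, ∫ x, f i x ∂(gaussianReal 0 1) := by
  letI : MeasureSpace ℝ := ⟨gaussianReal 0 1⟩
  haveI : SigmaFinite (volume : Measure ℝ) := inferInstanceAs (SigmaFinite (gaussianReal 0 1))
  exact MeasureTheory.integral_fintype_prod_eq_prod (𝕜 := ℝ) (fun i => f i)

lemma pi_integrable_prod {ι : Type*} [Fintype ι] (f : ι → ℝ → ℝ)
    (hf : ∀ i, Integrable (f i) (gaussianReal 0 1)) :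
    Integrable (fun ω : ι → ℝ => ∏ i, f i (ω i)) (Measure.pi fun _ => gaussianReal 0 1) := by
  letI : MeasureSpace ℝ := ⟨gaussianReal 0 1⟩
  haveI : SigmaFinite (volume : Measure ℝ) := inferInstanceAs (SigmaFinite (gaussianReal 0 1))
  exact Integrable.fintype_prod (𝕜 := ℝ) hf

lemma integral_exp_std (d : ℕ) (z : Fin d → ℝ) :
    ∫ ω, rexp (∑ i, ω i * z i) ∂(stdGaussian d) = rexp ((∑ i, z i ^ 2) / 2) := by
  have h : (fun ω : Fin d → ℝ => rexp (∑ i, ω i * z i))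
      = fun ω => ∏ i, rexp (z i * ω i) := by
    funext ω
    rw [Real.exp_sum]
    exact Finset.prod_congr rfl fun i _ => by rw [mul_comm]
  rw [_root_.stdGaussian, h, pi_integral_prod fun i x => rexp (z i * x)]
  simp_rw [integral_exp_mul_gauss, ← Real.exp_sum, Finset.sum_div]

lemma integrable_exp_std (d : ℕ) (z : Fin d → ℝ) :
    Integrable (fun ω => rexp (∑ i, ω i * z i)) (stdGaussian d) := by
  have h : (fun ω : Fin d → ℝ => rexp (∑ i, ω i * z i))
      = fun ω => ∏ i, rexp (z i * ω i) := by
    funext ω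
    rw [Real.exp_sum]
    exact Finset.prod_congr rfl fun i _ => by rw [mul_comm]
  rw [_root_.stdGaussian, h]
  exact pi_integrable_prod _ fun i => integrable_exp_mul_gauss (z i)

lemma integral_cosh_std (d : ℕ) (z : Fin d → ℝ) :
    ∫ ω, Real.cosh (∑ i, ω i * z i) ∂(stdGaussian d) = rexp ((∑ i, z i ^ 2) / 2) := by
  have hcosh : (fun ω : Fin d → ℝ => Real.cosh (∑ i, ω i * z i))
      = fun ω => (rexp (∑ i, ω i * z i) + rexp (∑ i, ω i * (-z) i)) / 2 := by
    funext ω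
    rw [Real.cosh_eq]
    congr 2
    simp [mul_neg]
  rw [hcosh]
  simp_rw [div_eq_mul_inv]
  rw [integral_mul_const, integral_add (integrable_exp_std d z) (integrable_exp_std d (-z)),
    integral_exp_std, integral_exp_std]
  have hzz : ∑ i, (-z) i ^ 2 = ∑ i, z i ^ 2 := by simp
  rw [hzz]
  ring_nf

/-- For `x y : ℝ^d` and `z = x + y`,
`exp(xᵀy) = exp(-(‖x‖² + ‖y‖²)/2) ⬝ E_{ω ~ N(0,I_d)}[cosh(ωᵀz)]`. -/
theorem softmax_hyperbolic_cosine_representation (d : ℕ) (x y : Fin d → ℝ) :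
    Real.exp (∑ i, x i * y i) =
      Real.exp (-((∑ i, x i ^ 2) + ∑ i, y i ^ 2) / 2) *
        ∫ ω, Real.cosh (∑ i, ω i * (x i + y i)) ∂(stdGaussian d) := by
  have hI := integral_cosh_std d (fun i => x i + y i)
  rw [hI, ← Real.exp_add]
  congr 1
  have h : ∑ i, (x i + y i) ^ 2 = (∑ i, x i ^ 2) + (∑ i, y i ^ 2) + 2 * ∑ i, x i * y i := by
    simp only [add_sq]
    rw [Finset.sum_add_distrib, Finset.sum_add_distrib, Finset.mul_sum]
    ring_nf
  rw [h]
  ring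
end

section
/- Let x, y in R^d, z = x + y, and let SM(x,y) = exp(x^T y). The variance of the single-sample positive random feature estimator exp(-(||x||²+||y||²)/2) exp(ω^T z) for ω ~ N(0, I_d) equals exp(||z||²) · SM(x,y)² · (1 - exp(-||z||²)). -/
open MeasureTheory ProbabilityTheory

lemma mgf_std (t : ℝ) : ∫ x, Real.exp (t * x) ∂(gaussianReal 0 1) = Real.exp (t ^ 2 / 2) := by
  rw [gaussianReal_of_var_ne_zero _ one_ne_zero]
  have hm : Measurable fun x => (gaussianPDFReal 0 1 x).toNNReal :=
    (measurable_gaussianPDFReal 0 1).real_toNNReal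
  have : (gaussianPDF 0 1) = fun x => ((gaussianPDFReal 0 1 x).toNNReal : ENNReal) := by
    funext x; simp [gaussianPDF, ENNReal.ofReal]
  rw [this, integral_withDensity_eq_integral_smul hm]
  have key : ∀ x, (gaussianPDFReal 0 1 x).toNNReal • Real.exp (t * x)
      = Real.exp (t ^ 2 / 2) * gaussianPDFReal t 1 x := by
    intro x
    rw [NNReal.smul_def, Real.coe_toNNReal _ (gaussianPDFReal_nonneg 0 1 x)]
    simp only [gaussianPDFReal, NNReal.coe_one, mul_one, smul_eq_mul]
    have e1 : Real.exp (-(x - 0) ^ 2 / 2) * Real.exp (t * x) =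
        Real.exp (t ^ 2 / 2) * Real.exp (-(x - t) ^ 2 / 2) := by
      rw [← Real.exp_add, ← Real.exp_add]; congr 1; ring
    linear_combination (√(2 * Real.pi))⁻¹ * e1
  simp_rw [key]
  rw [integral_const_mul, integral_gaussianPDFReal_eq_one t one_ne_zero, mul_one]

lemma intexp (d : ℕ) (z : Fin d → ℝ) :
    ∫ ω, Real.exp (∑ i, ω i * z i) ∂(stdGaussian d) = Real.exp ((∑ i, z i ^ 2) / 2) := by
  letI : MeasureSpace ℝ := ⟨gaussianReal 0 1⟩
  haveI : SigmaFinite (volume : Measure ℝ) := by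
    change SigmaFinite (gaussianReal 0 1); infer_instance
  have hv : stdGaussian d = (volume : Measure (Fin d → ℝ)) := rfl
  rw [hv]
  calc ∫ ω : Fin d → ℝ, Real.exp (∑ i, ω i * z i)
      = ∫ ω : Fin d → ℝ, ∏ i, Real.exp (ω i * z i) := by
        congr 1; funext ω; rw [Real.exp_sum]
    _ = ∏ i, ∫ t : ℝ, Real.exp (t * z i) := by
        exact MeasureTheory.integral_fintype_prod_eq_prod (fun i t => Real.exp (t * z i)) (μ := fun _ => volume)
    _ = ∏ i, Real.exp (z i ^ 2 / 2) := by
        refine Finset.prod_congr rfl fun i _ => ?_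
        have h := mgf_std (z i); simp only [mul_comm] at h ⊢; exact h
    _ = Real.exp ((∑ i, z i ^ 2) / 2) := by
        rw [← Real.exp_sum, Finset.sum_div]

/-- Variance of the single-sample positive random feature estimator
`Ŝ(ω) = exp(-(‖x‖²+‖y‖²)/2) exp(ωᵀz)`, `z = x + y`, for `ω ~ N(0,I_d)` equals
`exp(‖z‖²) ⬝ SM(x,y)² ⬝ (1 - exp(-‖z‖²))` where `SM(x,y) = exp(xᵀy)`. -/
theorem positive_feature_estimator_variance (d : ℕ) (x y : Fin d → ℝ) :
    (∫ ω, (Real.exp (-((∑ i, x i ^ 2) + ∑ i, y i ^ 2) / 2) *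
            Real.exp (∑ i, ω i * (x i + y i))) ^ 2 ∂(stdGaussian d)) -
      (∫ ω, Real.exp (-((∑ i, x i ^ 2) + ∑ i, y i ^ 2) / 2) *
            Real.exp (∑ i, ω i * (x i + y i)) ∂(stdGaussian d)) ^ 2 =
      Real.exp (∑ i, (x i + y i) ^ 2) * Real.exp (∑ i, x i * y i) ^ 2 *
        (1 - Real.exp (-∑ i, (x i + y i) ^ 2)) := by
  set c : ℝ := Real.exp (-((∑ i, x i ^ 2) + ∑ i, y i ^ 2) / 2) with hc
  have h1 : (∫ ω, (c * Real.exp (∑ i, ω i * (x i + y i))) ^ 2 ∂(stdGaussian d))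
      = c ^ 2 * Real.exp ((∑ i, (2 * (x i + y i)) ^ 2) / 2) := by
    rw [← intexp d (fun i => 2 * (x i + y i)), ← MeasureTheory.integral_const_mul]
    congr 1; funext ω
    have he : Real.exp (∑ i, ω i * (x i + y i)) ^ 2
        = Real.exp (∑ i, ω i * (2 * (x i + y i))) := by
      rw [sq, ← Real.exp_add, ← Finset.sum_add_distrib]
      exact congrArg Real.exp (Finset.sum_congr rfl fun i _ => by ring)
    rw [mul_pow, he]
  have h2 : (∫ ω, c * Real.exp (∑ i, ω i * (x i + y i)) ∂(stdGaussian d))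
      = c * Real.exp ((∑ i, (x i + y i) ^ 2) / 2) := by
    rw [MeasureTheory.integral_const_mul, intexp]
  rw [h1, h2]
  have hz4 : ∑ i, (2 * (x i + y i)) ^ 2 = 4 * ∑ i, (x i + y i) ^ 2 := by
    rw [Finset.mul_sum]; exact Finset.sum_congr rfl fun i _ => by ring
  have hZ : ∑ i, (x i + y i) ^ 2
      = (∑ i, x i ^ 2) + 2 * (∑ i, x i * y i) + ∑ i, y i ^ 2 := by
    rw [Finset.mul_sum, ← Finset.sum_add_distrib, ← Finset.sum_add_distrib]
    exact Finset.sum_congr rfl fun i _ => by ring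
  rw [hz4, hc]
  have E2 : ∀ a : ℝ, Real.exp a ^ 2 = Real.exp (2 * a) := fun a => by
    rw [sq, ← Real.exp_add, two_mul]
  rw [mul_pow, E2, E2, E2, ← Real.exp_add, ← Real.exp_add, ← Real.exp_add,
    mul_sub, mul_one, ← Real.exp_add]
  rw [hZ]
  congr 1 <;> · rw [Real.exp_eq_exp]; ring
end

section
/- Let x, y in R^d, z = x+y. The single-sample hyperbolic estimator Ŝ_hyp = (1/2) exp(-(||x||²+||y||²)/2)(exp(ω^T z) + exp(-ω^T z)) for ω ~ N(0, I_d) is unbiased for exp(x^T y), and Var(Ŝ_hyp) = (1/2)(1 - exp(-||z||²)) · Var(Ŝ_+), where Ŝ_+ = exp(-(||x||²+||y||²)/2) exp(ω^T z). -/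
open MeasureTheory ProbabilityTheory Real
open scoped ENNReal NNReal

lemma gauss_pt (c t : ℝ) :
    gaussianPDFReal 0 1 t * Real.exp (t * c) =
      Real.exp (c ^ 2 / 2) * gaussianPDFReal c 1 t := by
  simp only [gaussianPDFReal, NNReal.coe_one, mul_one]
  have h : Real.exp (-(t - 0) ^ 2 / 2) * Real.exp (t * c)
      = Real.exp (c ^ 2 / 2) * Real.exp (-(t - c) ^ 2 / 2) := by
    rw [← Real.exp_add, ← Real.exp_add]
    congr 1
    ring
  linear_combination (√(2 * π))⁻¹ * h

lemma gauss_int (c : ℝ) :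
    Integrable (fun t => Real.exp (t * c)) (gaussianReal 0 1) ∧
    ∫ t, Real.exp (t * c) ∂gaussianReal 0 1 = Real.exp (c ^ 2 / 2) := by
  have hd : gaussianReal 0 1 = volume.withDensity
      (fun t => ((gaussianPDFReal 0 1 t).toNNReal : ℝ≥0∞)) := by
    rw [gaussianReal_of_var_ne_zero 0 one_ne_zero]
    congr 1
  have hm : Measurable fun t => (gaussianPDFReal 0 1 t).toNNReal :=
    (measurable_gaussianPDFReal 0 1).real_toNNReal
  have hsmul : ∀ t : ℝ, (gaussianPDFReal 0 1 t).toNNReal • Real.exp (t * c)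
      = Real.exp (c ^ 2 / 2) * gaussianPDFReal c 1 t := by
    intro t
    rw [NNReal.smul_def, smul_eq_mul, Real.coe_toNNReal _ (gaussianPDFReal_nonneg 0 1 t),
      gauss_pt]
  constructor
  · rw [hd, integrable_withDensity_iff_integrable_smul hm]
    have : (fun t => (gaussianPDFReal 0 1 t).toNNReal • Real.exp (t * c))
        = fun t => Real.exp (c ^ 2 / 2) * gaussianPDFReal c 1 t := funext hsmul
    rw [this]
    exact (integrable_gaussianPDFReal c 1).const_mul _
  · rw [hd, integral_withDensity_eq_integral_smul hm]
    simp_rw [hsmul]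
    rw [integral_const_mul, integral_gaussianPDFReal_eq_one c one_ne_zero, mul_one]

lemma pi_key (d : ℕ) (c : Fin d → ℝ) :
    Integrable (fun ω => Real.exp (∑ i, ω i * c i)) (stdGaussian d) ∧
    ∫ ω, Real.exp (∑ i, ω i * c i) ∂stdGaussian d = Real.exp ((∑ i, c i ^ 2) / 2) := by
  letI : MeasureSpace ℝ := ⟨gaussianReal 0 1⟩
  haveI : SigmaFinite (volume : Measure ℝ) := by
    have : IsProbabilityMeasure (gaussianReal 0 1) := inferInstance
    exact inferInstance
  have hvol : (volume : Measure (Fin d → ℝ)) = stdGaussian d := rfl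
  have hexp : (fun ω : Fin d → ℝ => Real.exp (∑ i, ω i * c i))
      = fun ω => ∏ i, Real.exp (ω i * c i) := by
    funext ω; exact Real.exp_sum _ _
  constructor
  · rw [← hvol, hexp]
    exact Integrable.fintype_prod (f := fun i t => Real.exp (t * c i))
      (fun i => (gauss_int (c i)).1)
  · rw [← hvol, hexp]
    rw [MeasureTheory.integral_fintype_prod_volume_eq_prod (fun i t => Real.exp (t * c i))]
    have h2 : ∀ i : Fin d, (∫ x : ℝ, Real.exp (x * c i)) = Real.exp (c i ^ 2 / 2) :=
      fun i => (gauss_int (c i)).2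
    rw [Finset.prod_congr rfl fun i _ => h2 i]
    rw [← Real.exp_sum, ← Finset.sum_div]

instance (d : ℕ) : IsProbabilityMeasure (stdGaussian d) := by
  unfold _root_.stdGaussian; infer_instance

/-- The single-sample hyperbolic estimator
`Ŝ_hyp(ω) = (1/2) exp(-(‖x‖²+‖y‖²)/2)(exp(ωᵀz) + exp(-ωᵀz))`, `z = x + y`, `ω ~ N(0,I_d)`,
is unbiased for `exp(xᵀy)`, and its variance equals
`(1/2)(1 - exp(-‖z‖²))` times the variance of `Ŝ_+(ω) = exp(-(‖x‖²+‖y‖²)/2) exp(ωᵀz)`.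
(Variances are written as second moment minus squared mean.) -/
theorem hyperbolic_estimator_unbiased_and_variance (d : ℕ) (x y : Fin d → ℝ) :
    (∫ ω, (1 / 2) * Real.exp (-((∑ i, x i ^ 2) + ∑ i, y i ^ 2) / 2) *
        (Real.exp (∑ i, ω i * (x i + y i)) + Real.exp (-∑ i, ω i * (x i + y i)))
        ∂(stdGaussian d) = Real.exp (∑ i, x i * y i)) ∧
    ((∫ ω, ((1 / 2) * Real.exp (-((∑ i, x i ^ 2) + ∑ i, y i ^ 2) / 2) *
        (Real.exp (∑ i, ω i * (x i + y i)) + Real.exp (-∑ i, ω i * (x i + y i)))) ^ 2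
        ∂(stdGaussian d)) -
      (∫ ω, (1 / 2) * Real.exp (-((∑ i, x i ^ 2) + ∑ i, y i ^ 2) / 2) *
        (Real.exp (∑ i, ω i * (x i + y i)) + Real.exp (-∑ i, ω i * (x i + y i)))
        ∂(stdGaussian d)) ^ 2 =
      (1 / 2) * (1 - Real.exp (-∑ i, (x i + y i) ^ 2)) *
        ((∫ ω, (Real.exp (-((∑ i, x i ^ 2) + ∑ i, y i ^ 2) / 2) *
            Real.exp (∑ i, ω i * (x i + y i))) ^ 2 ∂(stdGaussian d)) -
          (∫ ω, Real.exp (-((∑ i, x i ^ 2) + ∑ i, y i ^ 2) / 2) *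
            Real.exp (∑ i, ω i * (x i + y i)) ∂(stdGaussian d)) ^ 2)) := by
  set z : Fin d → ℝ := fun i => x i + y i with hz
  set a : ℝ := Real.exp (-((∑ i, x i ^ 2) + ∑ i, y i ^ 2) / 2) with ha
  set S : ℝ := ∑ i, z i ^ 2 with hS
  obtain ⟨hi1, he1⟩ := pi_key d z
  obtain ⟨hi2, he2⟩ := pi_key d (fun i => -z i)
  obtain ⟨hi3, he3⟩ := pi_key d (fun i => 2 * z i)
  obtain ⟨hi4, he4⟩ := pi_key d (fun i => -(2 * z i))
  -- exponent sums
  have hs2 : (∑ i, (-z i) ^ 2) = S := by rw [hS]; exact Finset.sum_congr rfl fun i _ => by ring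
  have hs3 : (∑ i, (2 * z i) ^ 2) / 2 = 2 * S := by
    rw [hS, Finset.mul_sum, Finset.sum_div]
    exact Finset.sum_congr rfl fun i _ => by ring
  have hs4 : (∑ i, (-(2 * z i)) ^ 2) / 2 = 2 * S := by
    rw [← hs3]; congr 1; exact Finset.sum_congr rfl fun i _ => by ring
  rw [hs2] at he2
  rw [hs3] at he3
  rw [hs4] at he4
  -- negation of exponent
  have hneg : ∀ ω : Fin d → ℝ, (-∑ i, ω i * z i) = ∑ i, ω i * (-z i) := by
    intro ω
    rw [← Finset.sum_neg_distrib]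
    exact Finset.sum_congr rfl fun i _ => by ring
  -- mean
  have hmean : (∫ ω, (1 / 2) * a *
      (Real.exp (∑ i, ω i * z i) + Real.exp (-∑ i, ω i * z i)) ∂(stdGaussian d))
      = a * Real.exp (S / 2) := by
    simp_rw [hneg]
    rw [integral_const_mul, integral_add hi1 hi2, he1, he2]
    ring
  have hxy : a * Real.exp (S / 2) = Real.exp (∑ i, x i * y i) := by
    rw [ha, ← Real.exp_add]
    congr 1
    have : S = (∑ i, x i ^ 2) + 2 * (∑ i, x i * y i) + ∑ i, y i ^ 2 := by
      rw [hS, Finset.mul_sum, ← Finset.sum_add_distrib, ← Finset.sum_add_distrib]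
      exact Finset.sum_congr rfl fun i _ => by simp only [hz]; ring
    rw [this]; ring
  -- second moment
  have hsqfun : (fun ω : Fin d → ℝ => ((1 / 2) * a *
      (Real.exp (∑ i, ω i * z i) + Real.exp (-∑ i, ω i * z i))) ^ 2)
      = fun ω => (1 / 4 * a ^ 2) * (Real.exp (∑ i, ω i * (2 * z i))
          + Real.exp (∑ i, ω i * (-(2 * z i)))) + 1 / 2 * a ^ 2 := by
    funext ω
    have h1 : Real.exp (∑ i, ω i * z i) ^ 2 = Real.exp (∑ i, ω i * (2 * z i)) := by
      rw [sq, ← Real.exp_add, ← Finset.sum_add_distrib]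
      congr 1
      exact Finset.sum_congr rfl fun i _ => by ring
    have h2 : Real.exp (-∑ i, ω i * z i) ^ 2 = Real.exp (∑ i, ω i * (-(2 * z i))) := by
      rw [sq, ← Real.exp_add]
      congr 1
      rw [← Finset.sum_neg_distrib, ← Finset.sum_add_distrib]
      exact Finset.sum_congr rfl fun i _ => by ring
    have h3 : Real.exp (∑ i, ω i * z i) * Real.exp (-∑ i, ω i * z i) = 1 := by
      rw [← Real.exp_add, add_neg_cancel, Real.exp_zero]
    nlinarith [h1, h2, h3]
  have hsnd : (∫ ω, ((1 / 2) * a *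
      (Real.exp (∑ i, ω i * z i) + Real.exp (-∑ i, ω i * z i))) ^ 2 ∂(stdGaussian d))
      = (1 / 4 * a ^ 2) * (Real.exp (2 * S) + Real.exp (2 * S)) + 1 / 2 * a ^ 2 := by
    rw [hsqfun]
    have hInt : Integrable (fun ω : Fin d → ℝ => (1 / 4 * a ^ 2) *
        (Real.exp (∑ i, ω i * (2 * z i)) + Real.exp (∑ i, ω i * (-(2 * z i)))))
        (stdGaussian d) := (hi3.add hi4).const_mul _
    rw [integral_add hInt (integrable_const _), integral_const_mul,
      integral_add hi3 hi4, he3, he4, integral_const]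
    simp
  -- S_plus integrals
  have hp2 : (∫ ω, (a * Real.exp (∑ i, ω i * z i)) ^ 2 ∂(stdGaussian d))
      = a ^ 2 * Real.exp (2 * S) := by
    have : (fun ω : Fin d → ℝ => (a * Real.exp (∑ i, ω i * z i)) ^ 2)
        = fun ω => a ^ 2 * Real.exp (∑ i, ω i * (2 * z i)) := by
      funext ω
      have h1 : Real.exp (∑ i, ω i * z i) ^ 2 = Real.exp (∑ i, ω i * (2 * z i)) := by
        rw [sq, ← Real.exp_add, ← Finset.sum_add_distrib]
        congr 1
        exact Finset.sum_congr rfl fun i _ => by ring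
      rw [mul_pow, h1]
    rw [this, integral_const_mul, he3]
  have hp1 : (∫ ω, a * Real.exp (∑ i, ω i * z i) ∂(stdGaussian d))
      = a * Real.exp (S / 2) := by
    rw [integral_const_mul, he1]
  rw [hmean, hsnd, hp1, hp2]
  refine ⟨hxy, ?_⟩
  -- algebra
  have hB : Real.exp (S / 2) ^ 2 = Real.exp S := by
    rw [sq, ← Real.exp_add]; congr 1; ring
  have h2S : Real.exp (2 * S) = Real.exp S ^ 2 := by
    rw [sq, ← Real.exp_add]; congr 1; ring
  have hnS : Real.exp (-S) * Real.exp S = 1 := by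
    rw [← Real.exp_add, neg_add_cancel, Real.exp_zero]
  have hnegS : Real.exp (-∑ i, (x i + y i) ^ 2) = Real.exp (-S) := by
    congr 2
  rw [hnegS, h2S, mul_pow, hB]
  linear_combination (1 / 2 * a ^ 2 * (Real.exp S - 1)) * hnS
end

section
/- Let μ_d(j) denote the j-th moment of the chi distribution with d degrees of freedom, i.e. μ_d(j) = E[||g||^j] for g ~ N(0, I_d). If d_1, ..., d_m are even nonnegative integers with at least two distinct indices i ≠ j satisfying d_i, d_j > 0, then (∏_{i=1}^m μ_d(d_i)) / μ_d(∑_i d_i) ≤ d/(d+2). -/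
open MeasureTheory ProbabilityTheory Real Set Filter
open scoped ENNReal NNReal

lemma lintegral_pi_prod {n : ℕ} (f : Fin n → ℝ → ℝ≥0∞) (hf : ∀ i, Measurable (f i)) :
    ∫⁻ x : Fin n → ℝ, ∏ i, f i (x i) ∂(Measure.pi fun _ => (volume : Measure ℝ)) =
      ∏ i, ∫⁻ t, f i t := by
  induction n with
  | zero => simp
  | succ n ih =>
    have h := (measurePreserving_piFinSuccAbove (fun _ : Fin (n+1) => (volume : Measure ℝ)) 0)
    have hF : Measurable fun y : ℝ × (Fin n → ℝ) => f 0 y.1 * ∏ i, f i.succ (y.2 i) := by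
      refine ((hf 0).comp measurable_fst).mul ?_
      exact Finset.measurable_prod _ fun i _ =>
        (hf i.succ).comp ((measurable_pi_apply i).comp measurable_snd)
    have h2 := h.lintegral_comp hF
    simp only [MeasurableEquiv.piFinSuccAbove_apply, Fin.insertNthEquiv, Equiv.coe_fn_symm_mk,
      Fin.removeNth, Fin.succAbove_zero] at h2
    rw [show (∫⁻ x : Fin (n+1) → ℝ, ∏ i, f i (x i)
          ∂(Measure.pi fun _ => (volume : Measure ℝ)))
        = ∫⁻ x : Fin (n+1) → ℝ, f 0 (x 0) * ∏ i : Fin n, f i.succ (x i.succ)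
          ∂(Measure.pi fun _ => (volume : Measure ℝ)) from
      lintegral_congr fun x => Fin.prod_univ_succ _]
    rw [h2, lintegral_prod_mul (f := fun t => f 0 t) (g := fun v : Fin n → ℝ => ∏ i, f i.succ (v i))
        (hf 0).aemeasurable
        (Finset.measurable_prod _ fun i _ => (hf i.succ).comp (measurable_pi_apply i)).aemeasurable,
      ih (fun i => f i.succ) (fun i => hf i.succ), Fin.prod_univ_succ]

lemma stdGaussian_eq_withDensity (d : ℕ) :
    stdGaussian d = (volume : Measure (Fin d → ℝ)).withDensity
      (fun x => ∏ i, gaussianPDF 0 1 (x i)) := by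
  refine Measure.pi_eq fun s hs => ?_
  rw [withDensity_apply _ (MeasurableSet.univ_pi hs),
    ← lintegral_indicator (MeasurableSet.univ_pi hs)]
  have h1 : ∀ x : Fin d → ℝ, (univ.pi s).indicator (fun x => ∏ i, gaussianPDF 0 1 (x i)) x
      = ∏ i, (s i).indicator (gaussianPDF 0 1) (x i) := by
    intro x
    by_cases hx : x ∈ univ.pi s
    · rw [indicator_of_mem hx]
      exact Finset.prod_congr rfl fun i _ => (indicator_of_mem (hx i (Set.mem_univ i)) _).symm
    · rw [indicator_of_notMem hx]
      rw [Set.mem_pi] at hx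
      push_neg at hx
      obtain ⟨i, -, hi⟩ := hx
      exact (Finset.prod_eq_zero (Finset.mem_univ i) (by simp [indicator_of_notMem hi])).symm
  calc ∫⁻ x, (univ.pi s).indicator (fun x => ∏ i, gaussianPDF 0 1 (x i)) x
      = ∫⁻ x : Fin d → ℝ, ∏ i, (s i).indicator (gaussianPDF 0 1) (x i)
        ∂(Measure.pi fun _ => (volume : Measure ℝ)) := by
        rw [← volume_pi]; exact lintegral_congr h1
    _ = ∏ i, ∫⁻ t, (s i).indicator (gaussianPDF 0 1) t :=
        lintegral_pi_prod _ fun i => (measurable_gaussianPDF 0 1).indicator (hs i)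
    _ = ∏ i, gaussianReal 0 1 (s i) := by
        refine Finset.prod_congr rfl fun i _ => ?_
        rw [lintegral_indicator (hs i), gaussianReal_of_var_ne_zero _ one_ne_zero,
          withDensity_apply _ (hs i)]

noncomputable def J (n : ℕ) : ℝ := ∫ r in Ioi (0:ℝ), r ^ n * Real.exp (-r^2/2)

lemma integrableOn_J (n : ℕ) :
    IntegrableOn (fun r : ℝ => r ^ n * Real.exp (-r^2/2)) (Ioi 0) volume := by
  have h := integrableOn_rpow_mul_exp_neg_mul_sq (b := 1/2) one_half_pos
    (s := (n:ℝ)) ((by norm_num : (-1:ℝ) < 0).trans_le (Nat.cast_nonneg n))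
  refine h.congr_fun (fun x hx => ?_) measurableSet_Ioi
  simp only [Real.rpow_natCast]
  ring_nf

lemma tendsto_pow_mul_exp (n : ℕ) :
    Tendsto (fun r : ℝ => r ^ n * Real.exp (-r^2/2)) atTop (nhds 0) := by
  have hexp : Tendsto (fun x : ℝ => Real.exp (-(1/2) * x)) atTop (nhds 0) := by
    have h1 : Tendsto (fun x : ℝ => (1/2 : ℝ) * x) atTop atTop :=
      (tendsto_const_mul_atTop_of_pos one_half_pos).mpr tendsto_id
    have h2 := Real.tendsto_exp_atBot.comp (tendsto_neg_atTop_atBot.comp h1)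
    simpa [Function.comp_def, neg_mul] using h2
  have h := (rpow_mul_exp_neg_mul_sq_isLittleO_exp_neg one_half_pos (n:ℝ)).isBigO.trans_tendsto
    hexp
  refine h.congr' ?_
  filter_upwards [eventually_gt_atTop (0:ℝ)] with x hx
  rw [Real.rpow_natCast]
  ring_nf

lemma J_pos (n : ℕ) : 0 < J n := by
  rw [J, setIntegral_pos_iff_support_of_nonneg_ae]
  · rw [show (Function.support fun r : ℝ => r ^ n * Real.exp (-r^2/2)) ∩ Ioi 0 = Ioi 0 from ?_]
    · simp
    · refine inter_eq_right.mpr fun x hx => ?_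
      have : (0:ℝ) < x := hx
      simp only [Function.mem_support]
      positivity
  · filter_upwards [ae_restrict_mem measurableSet_Ioi] with x hx
    have : (0:ℝ) < x := hx
    positivity
  · exact integrableOn_J n

lemma J_rec (n : ℕ) : J (n + 2) = (n + 1) * J n := by
  have hderiv : ∀ r ∈ Ioi (0:ℝ), HasDerivAt (fun r : ℝ => -(r ^ (n+1) * Real.exp (-r^2/2)))
      (r ^ (n+2) * Real.exp (-r^2/2) - (n+1) * (r ^ n * Real.exp (-r^2/2))) r := by
    intro r _
    have h1 : HasDerivAt (fun r : ℝ => -r^2/2) (-r) r := by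
      refine ((hasDerivAt_pow 2 r).fun_neg.div_const 2).congr_deriv ?_
      push_cast
      ring
    have h2 : HasDerivAt (fun r : ℝ => Real.exp (-r^2/2)) (Real.exp (-r^2/2) * (-r)) r :=
      (Real.hasDerivAt_exp _).comp r h1
    have h3 := ((hasDerivAt_pow (n+1) r).mul h2).fun_neg
    refine h3.congr_deriv ?_
    push_cast
    ring
  have htend : Tendsto (fun r : ℝ => -(r ^ (n+1) * Real.exp (-r^2/2))) atTop (nhds 0) := by
    simpa using (tendsto_pow_mul_exp (n+1)).neg
  have hint : IntegrableOn (fun r : ℝ =>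
      r ^ (n+2) * Real.exp (-r^2/2) - (n+1) * (r ^ n * Real.exp (-r^2/2))) (Ioi 0) volume :=
    (integrableOn_J (n+2)).sub ((integrableOn_J n).const_mul _)
  have hcont : ContinuousWithinAt (fun r : ℝ => -(r ^ (n+1) * Real.exp (-r^2/2))) (Ici 0) 0 :=
    (Continuous.continuousWithinAt (by continuity))
  have key := integral_Ioi_of_hasDerivAt_of_tendsto hcont hderiv hint htend
  rw [integral_sub (integrableOn_J (n+2)) ((integrableOn_J n).const_mul _),
    integral_const_mul] at key
  simp only [zero_pow (Nat.succ_ne_zero n), zero_mul, neg_zero, sub_zero, zero_sub, neg_neg] at key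
  rw [J, J]
  linarith [key]

lemma integral_stdGaussian_eq (d : ℕ) (F : (Fin d → ℝ) → ℝ) :
    ∫ g, F g ∂(stdGaussian d)
      = ∫ x, (∏ i, gaussianPDFReal 0 1 (x i)) * F x := by
  rw [stdGaussian_eq_withDensity]
  have hmeas : Measurable fun x : Fin d → ℝ =>
      ∏ i, (gaussianPDFReal 0 1 (x i)).toNNReal :=
    Finset.measurable_prod _ fun i _ =>
      ((measurable_gaussianPDFReal 0 1).comp (measurable_pi_apply i)).real_toNNReal
  rw [show ((volume : Measure (Fin d → ℝ)).withDensity fun x => ∏ i, gaussianPDF 0 1 (x i))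
      = (volume : Measure (Fin d → ℝ)).withDensity
        (fun x => ((∏ i, (gaussianPDFReal 0 1 (x i)).toNNReal : ℝ≥0) : ℝ≥0∞)) from by
    congr 1
    funext x
    rw [ENNReal.coe_finset_prod]
    exact Finset.prod_congr rfl fun _ _ => rfl]
  rw [integral_withDensity_eq_integral_smul hmeas]
  refine integral_congr_ae (Filter.Eventually.of_forall fun x => ?_)
  simp only [NNReal.smul_def, NNReal.coe_prod]
  congr 1
  exact Finset.prod_congr rfl fun i _ =>
    Real.coe_toNNReal _ (gaussianPDFReal_nonneg 0 1 (x i))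

lemma moment_eq_J (d k : ℕ) (hd : 1 ≤ d) :
    ∫ g, Real.sqrt (∑ j, g j ^ 2) ^ (2*k) ∂(stdGaussian d)
      = ((d : ℝ) * ((volume : Measure (EuclideanSpace ℝ (Fin d))) (Metric.ball 0 1)).toReal
          * ((Real.sqrt (2*Real.pi))⁻¹)^d) * J (d - 1 + 2*k) := by
  haveI : Nontrivial (EuclideanSpace ℝ (Fin d)) :=
    Module.nontrivial_of_finrank_pos (R := ℝ)
      (by rw [finrank_euclideanSpace_fin]; omega)
  rw [integral_stdGaussian_eq]
  set c : ℝ := (Real.sqrt (2*Real.pi))⁻¹ with hc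
  have hmp := (EuclideanSpace.volume_preserving_symm_measurableEquiv_toLp (Fin d)).integral_comp'
    (fun x : Fin d → ℝ => (∏ i, gaussianPDFReal 0 1 (x i)) * Real.sqrt (∑ j, x j ^ 2) ^ (2*k))
  rw [← hmp]
  have hint : ∀ y : EuclideanSpace ℝ (Fin d),
      (∏ i, gaussianPDFReal 0 1 ((MeasurableEquiv.toLp 2 (Fin d → ℝ)).symm y i))
        * Real.sqrt (∑ j, ((MeasurableEquiv.toLp 2 (Fin d → ℝ)).symm y j) ^ 2) ^ (2*k)
      = (fun r : ℝ => c^d * Real.exp (-r^2/2) * r^(2*k)) ‖y‖ := by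
    intro y
    have happ : ∀ i, (MeasurableEquiv.toLp 2 (Fin d → ℝ)).symm y i = y i := fun _ => rfl
    simp only [happ]
    have hns : ∑ j, y j ^ 2 = ‖y‖^2 := by
      rw [EuclideanSpace.norm_eq, Real.sq_sqrt (by positivity)]
      simp [sq_abs]
    have h1 : ∏ i, gaussianPDFReal 0 1 (y i) = c^d * Real.exp (-‖y‖^2/2) := by
      have : ∀ i : Fin d, gaussianPDFReal 0 1 (y i) = c * Real.exp (-(y i)^2/2) := by
        intro i
        simp [gaussianPDFReal, hc]
      rw [Finset.prod_congr rfl fun i _ => this i, Finset.prod_mul_distrib,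
        Finset.prod_const, ← Real.exp_sum, Finset.card_univ, Fintype.card_fin]
      congr 1
      rw [← hns, ← Finset.sum_div, ← Finset.sum_neg_distrib]
    have h2 : Real.sqrt (∑ j, y j ^ 2) = ‖y‖ := by
      rw [hns, Real.sqrt_sq (norm_nonneg y)]
    rw [h1, h2]
  rw [integral_congr_ae (Filter.Eventually.of_forall hint),
    integral_fun_norm_addHaar volume (fun r : ℝ => c^d * Real.exp (-r^2/2) * r^(2*k)),
    finrank_euclideanSpace_fin]
  rw [show (fun y : ℝ => y ^ (d-1) • (c^d * Real.exp (-y^2/2) * y^(2*k)))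
      = fun y : ℝ => c^d * (y^(d-1+2*k) * Real.exp (-y^2/2)) from
    funext fun y => by rw [smul_eq_mul, pow_add]; ring]
  rw [J, integral_const_mul, nsmul_eq_mul, smul_eq_mul, measureReal_def]
  ring

def Q (d : ℕ) (k : ℕ) : ℕ := ∏ t ∈ Finset.range k, (d + 2*t)

lemma Q_pos {d : ℕ} (hd : 1 ≤ d) (k : ℕ) : 0 < Q d k :=
  Finset.prod_pos fun t _ => by omega

lemma Q_succ (d k : ℕ) : Q d (k+1) = Q d k * (d + 2*k) := Finset.prod_range_succ _ _

lemma Q_submul {d : ℕ} (a b : ℕ) : Q d a * Q d b ≤ Q d (a+b) := by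
  rw [Q, Q, Q, Finset.prod_range_add]
  refine Nat.mul_le_mul_left _ (Finset.prod_le_prod' fun t _ => by omega)

lemma Q_two {d : ℕ} {a b : ℕ} (ha : 1 ≤ a) (hb : 1 ≤ b) :
    (d+2) * (Q d a * Q d b) ≤ d * Q d (a+b) := by
  obtain ⟨b', rfl⟩ : ∃ b', b = b' + 1 := ⟨b - 1, by omega⟩
  rw [show Q d (a + (b'+1)) = Q d a * ∏ t ∈ Finset.range (b'+1), (d + 2*(a+t)) from by
    rw [Q, Q, Finset.prod_range_add]]
  have h1 : (d+2) * Q d (b'+1) ≤ d * ∏ t ∈ Finset.range (b'+1), (d + 2*(a+t)) := by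
    rw [Q, Finset.prod_range_succ', Finset.prod_range_succ']
    have h2 : ∏ t ∈ Finset.range b', (d + 2*(t+1)) ≤ ∏ t ∈ Finset.range b', (d + 2*(a+(t+1))) :=
      Finset.prod_le_prod' fun t _ => by omega
    calc (d+2) * ((∏ t ∈ Finset.range b', (d + 2*(t+1))) * (d + 2*0))
        = (∏ t ∈ Finset.range b', (d + 2*(t+1))) * ((d+2) * d) := by ring
      _ ≤ (∏ t ∈ Finset.range b', (d + 2*(a+(t+1)))) * ((d + 2*a) * d) := by
          exact Nat.mul_le_mul h2 (Nat.mul_le_mul_right d (by omega))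
      _ = d * ((∏ t ∈ Finset.range b', (d + 2*(a+(t+1)))) * (d + 2*(a+0))) := by ring
  calc (d+2) * (Q d a * Q d (b'+1)) = Q d a * ((d+2) * Q d (b'+1)) := by ring
    _ ≤ Q d a * (d * ∏ t ∈ Finset.range (b'+1), (d + 2*(a+t))) := Nat.mul_le_mul_left _ h1
    _ = d * (Q d a * ∏ t ∈ Finset.range (b'+1), (d + 2*(a+t))) := by ring

lemma Q_prod_le {d : ℕ} {ι : Type*} (s : Finset ι) (c : ι → ℕ) :
    ∏ i ∈ s, Q d (c i) ≤ Q d (∑ i ∈ s, c i) := by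
  classical
  induction s using Finset.induction with
  | empty => simp [Q]
  | insert _ _ hnot ih =>
    rw [Finset.prod_insert hnot, Finset.sum_insert hnot]
    calc Q d (c _) * ∏ i ∈ _, Q d (c i) ≤ Q d (c _) * Q d (∑ i ∈ _, c i) :=
          Nat.mul_le_mul_left _ ih
      _ ≤ _ := Q_submul _ _

lemma Q_main {d m : ℕ} (c : Fin m → ℕ) {i j : Fin m} (hij : i ≠ j)
    (hi : 1 ≤ c i) (hj : 1 ≤ c j) :
    (d+2) * ∏ t, Q d (c t) ≤ d * Q d (∑ t, c t) := by
  classical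
  have hjmem : j ∈ (Finset.univ : Finset (Fin m)).erase i := Finset.mem_erase.mpr ⟨hij.symm, Finset.mem_univ j⟩
  rw [← Finset.mul_prod_erase Finset.univ _ (Finset.mem_univ i), ← Finset.mul_prod_erase _ _ hjmem,
    ← Finset.add_sum_erase Finset.univ c (Finset.mem_univ i), ← Finset.add_sum_erase _ c hjmem]
  set R := ((Finset.univ : Finset (Fin m)).erase i).erase j
  calc (d+2) * (Q d (c i) * (Q d (c j) * ∏ t ∈ R, Q d (c t)))
      ≤ (d+2) * (Q d (c i) * (Q d (c j) * Q d (∑ t ∈ R, c t))) := by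
        exact Nat.mul_le_mul_left _ (Nat.mul_le_mul_left _ (Nat.mul_le_mul_left _ (Q_prod_le R c)))
    _ = ((d+2) * (Q d (c i) * Q d (c j))) * Q d (∑ t ∈ R, c t) := by ring
    _ ≤ (d * Q d (c i + c j)) * Q d (∑ t ∈ R, c t) :=
        Nat.mul_le_mul_right _ (Q_two hi hj)
    _ = d * (Q d (c i + c j) * Q d (∑ t ∈ R, c t)) := by ring
    _ ≤ d * Q d (c i + c j + ∑ t ∈ R, c t) := Nat.mul_le_mul_left _ (Q_submul _ _)
    _ = d * Q d (c i + (c j + ∑ t ∈ R, c t)) := by rw [add_assoc]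

lemma moment_rec (d k : ℕ) (hd : 1 ≤ d) :
    ∫ g, Real.sqrt (∑ j, g j ^ 2) ^ (2*(k+1)) ∂(stdGaussian d)
      = ((d:ℝ) + 2*k) * ∫ g, Real.sqrt (∑ j, g j ^ 2) ^ (2*k) ∂(stdGaussian d) := by
  rw [moment_eq_J d (k+1) hd, moment_eq_J d k hd,
    show d - 1 + 2*(k+1) = (d - 1 + 2*k) + 2 from by omega, J_rec]
  have hcast : ((d - 1 + 2*k : ℕ) : ℝ) + 1 = (d:ℝ) + 2*k := by
    push_cast [Nat.cast_sub hd]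
    ring
  rw [hcast]
  ring

lemma moment_eq (d : ℕ) (hd : 1 ≤ d) (k : ℕ) :
    ∫ g, Real.sqrt (∑ j, g j ^ 2) ^ (2*k) ∂(stdGaussian d) = (Q d k : ℝ) := by
  haveI : IsProbabilityMeasure (stdGaussian d) := by
    unfold _root_.stdGaussian; infer_instance
  induction k with
  | zero => simp [Q]
  | succ k ih =>
    rw [moment_rec d k hd, ih, Q_succ]
    push_cast
    ring

/-- Let `μ_d(j) = E[‖g‖^j]` for `g ~ N(0, I_d)` (the `j`-th moment of the chi distribution
with `d` degrees of freedom). If `d₁, ..., d_m` are even naturals with at least two distinct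
indices `i ≠ j` satisfying `dᵢ, dⱼ > 0`, then
`(∏ᵢ μ_d(dᵢ)) / μ_d(∑ᵢ dᵢ) ≤ d/(d+2)`. -/
theorem chi_moment_ratio_le (d m : ℕ) (hd : 1 ≤ d) (dv : Fin m → ℕ)
    (heven : ∀ i, Even (dv i))
    (htwo : ∃ i j, i ≠ j ∧ 0 < dv i ∧ 0 < dv j) :
    (∏ i, ∫ g, Real.sqrt (∑ j, g j ^ 2) ^ dv i ∂(stdGaussian d)) /
        (∫ g, Real.sqrt (∑ j, g j ^ 2) ^ (∑ i, dv i) ∂(stdGaussian d)) ≤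
      (d : ℝ) / ((d : ℝ) + 2) := by
  obtain ⟨i, j, hij, hi, hj⟩ := htwo
  set c : Fin m → ℕ := fun t => dv t / 2 with hcdef
  have hdv : ∀ t, dv t = 2 * c t := by
    intro t
    obtain ⟨r, hr⟩ := heven t
    simp only [hcdef]
    omega
  have hM : ∀ t, (∫ g, Real.sqrt (∑ j, g j ^ 2) ^ dv t ∂(stdGaussian d)) = (Q d (c t) : ℝ) := by
    intro t
    conv_lhs => rw [hdv t]
    exact moment_eq d hd (c t)
  have hsum : (∫ g, Real.sqrt (∑ j, g j ^ 2) ^ (∑ t, dv t) ∂(stdGaussian d))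
      = (Q d (∑ t, c t) : ℝ) := by
    conv_lhs => rw [show ∑ t, dv t = 2 * ∑ t, c t from by
      rw [Finset.mul_sum]; exact Finset.sum_congr rfl fun t _ => hdv t]
    exact moment_eq d hd _
  rw [Finset.prod_congr rfl (fun t _ => hM t), hsum]
  have key := Q_main (d := d) c hij (by have := hdv i; omega) (by have := hdv j; omega)
  have hkey : ((d:ℝ) + 2) * ∏ t, (Q d (c t) : ℝ) ≤ (d:ℝ) * (Q d (∑ t, c t) : ℝ) := by
    have := (Nat.cast_le (α := ℝ)).mpr key
    push_cast at this
    linarith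
  have hQpos : (0:ℝ) < (Q d (∑ t, c t) : ℝ) := by
    exact_mod_cast Q_pos hd _
  have hd2 : (0:ℝ) < (d:ℝ) + 2 := by positivity
  rw [div_le_div_iff₀ hQpos hd2]
  linarith
end
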